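/- Suppose the integers a, b, c, d satisfy d > c > b > a ≥ 2, they are pairwise coprime, and 1/a + 1/b + 1/c + 1/d = 1 + 1/(a·b·c·d). Then a = 2 and b = 3. -/

import Mathlib

lemma aux_one_div_le (x y : ℤ) (hy : 0 < y) (hxy : y ≤ x) :
    (1 : ℚ) / (x : ℚ) ≤ 1 / (y : ℚ) := by
  apply one_div_le_one_div_of_le
  · exact_mod_cast hy
  · exact_mod_cast hxy

theorem stmt_1 (a b c d : ℤ) (ha : 2 ≤ a) (hab : a < b) (hbc : b < c) (hcd : c < d)
    (hab' : Int.gcd a b = 1) (hac : Int.gcd a c = 1) (had : Int.gcd a d = 1)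
    (hbc' : Int.gcd b c = 1) (hbd : Int.gcd b d = 1) (hcd' : Int.gcd c d = 1)
    (heq : (1 : ℚ) / (a : ℚ) + 1 / (b : ℚ) + 1 / (c : ℚ) + 1 / (d : ℚ)
      = 1 + 1 / ((a : ℚ) * b * c * d)) :
    a = 2 ∧ b = 3 := by
  have ha0 : (0:ℤ) < a := by linarith
  have hb0 : (0:ℤ) < b := by linarith
  have hc0 : (0:ℤ) < c := by linarith
  have hd0 : (0:ℤ) < d := by linarith
  have haq : (0:ℚ) < (a:ℚ) := by exact_mod_cast ha0
  have hbq : (0:ℚ) < (b:ℚ) := by exact_mod_cast hb0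
  have hcq : (0:ℚ) < (c:ℚ) := by exact_mod_cast hc0
  have hdq : (0:ℚ) < (d:ℚ) := by exact_mod_cast hd0
  have hrhs : (1:ℚ) < 1 + 1/((a:ℚ)*b*c*d) := by
    have hprod : (0:ℚ) < (a:ℚ)*b*c*d := by positivity
    have := one_div_pos.mpr hprod
    linarith
  have ha2 : a = 2 := by
    by_contra h
    have ha3 : 3 ≤ a := by omega
    have hb4 : 4 ≤ b := by omega
    have hc5 : 5 ≤ c := by omega
    have hd6 : 6 ≤ d := by omega
    have h1 := aux_one_div_le a 3 (by norm_num) ha3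
    have h2 := aux_one_div_le b 4 (by norm_num) hb4
    have h3 := aux_one_div_le c 5 (by norm_num) hc5
    have h4 := aux_one_div_le d 6 (by norm_num) hd6
    simp only [one_div] at h1 h2 h3 h4 heq hrhs
    linarith
  subst ha2
  refine ⟨rfl, ?_⟩
  have hbodd : ¬ (2:ℤ) ∣ b := by
    intro h
    have : (2:ℤ) ∣ (Int.gcd 2 b : ℤ) := Int.dvd_coe_gcd dvd_rfl h
    rw [hab'] at this
    omega
  have hcodd : ¬ (2:ℤ) ∣ c := by
    intro h
    have : (2:ℤ) ∣ (Int.gcd 2 c : ℤ) := Int.dvd_coe_gcd dvd_rfl h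
    rw [hac] at this
    omega
  have hdodd : ¬ (2:ℤ) ∣ d := by
    intro h
    have : (2:ℤ) ∣ (Int.gcd 2 d : ℤ) := Int.dvd_coe_gcd dvd_rfl h
    rw [had] at this
    omega
  by_contra h
  have hb5 : 5 ≤ b := by omega
  have hc7 : 7 ≤ c := by omega
  have hd9 : 9 ≤ d := by omega
  have h1 := aux_one_div_le b 5 (by norm_num) hb5
  have h2 := aux_one_div_le c 7 (by norm_num) hc7
  have h3 := aux_one_div_le d 9 (by norm_num) hd9
  norm_num at h1 h2 h3 heq ⊢
  have hpos : (0:ℚ) < (↑d)⁻¹ * ((↑c)⁻¹ * ((↑b)⁻¹ * (1/2))) := by positivity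
  linarith
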